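/- The minimum length of a 2-radius sequence satisfies f_2(8) = 17, f_2(10) = 30, f_2(11) = 33, f_2(14) = 56, and f_2(15) = 60. In each of these cases f_2(n) equals the lower bound L(n), where L(n) = (1/2)·C(n,2) + n/4 + 1 if n ≡ 0 (mod 4), L(n) = (1/2)·C(n,2) + 2 if n ≡ 1 (mod 4), L(n) = (1/2)·C(n,2) + 3n/4 if n ≡ 2 (mod 4), and L(n) = (1/2)·C(n,2) + n/2 if n ≡ 3 (mod 4), with C(n,2) = n(n−1)/2. -/

import Mathlib

set_option maxRecDepth 100000
set_option maxHeartbeats 1000000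

/-- A `k`-radius sequence of order `n`: a sequence with entries in `{1,…,n}` such
that every pair of distinct elements of `{1,…,n}` occurs within distance `k`. -/
def IsKRadiusSeq (k n : ℕ) {m : ℕ} (a : Fin m → ℕ) : Prop :=
  (∀ i, a i ∈ Finset.Icc 1 n) ∧
    ∀ x ∈ Finset.Icc 1 n, ∀ y ∈ Finset.Icc 1 n, x ≠ y →
      ∃ i j : Fin m, a i = x ∧ a j = y ∧ ((i : ℤ) - (j : ℤ)).natAbs ≤ k

/-- `f_k(n)`: the minimum length of a `k`-radius sequence of order `n`. -/
noncomputable def radiusSeqMin (k n : ℕ) : ℕ :=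
  sInf {m | ∃ a : Fin m → ℕ, IsKRadiusSeq k n a}

/-- The Jaromczyk–Lonc lower bound `L(n)` for `f₂(n)`, where
`(1/2)·C(n,2) = n(n−1)/4`. -/
noncomputable def JLBound (n : ℕ) : ℚ :=
  if n % 4 = 0 then (n : ℚ) * ((n : ℚ) - 1) / 4 + (n : ℚ) / 4 + 1
  else if n % 4 = 1 then (n : ℚ) * ((n : ℚ) - 1) / 4 + 2
  else if n % 4 = 2 then (n : ℚ) * ((n : ℚ) - 1) / 4 + 3 * (n : ℚ) / 4
  else (n : ℚ) * ((n : ℚ) - 1) / 4 + (n : ℚ) / 2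


lemma pair_of_window (l : List ℕ) {x y : ℕ} (hy1 : 1 ≤ y)
    (h : ∃ i ∈ Finset.range l.length, l.getD i 0 = x ∧
        (l.getD (i+1) 0 = y ∨ l.getD (i+2) 0 = y)) :
    ∃ i j : Fin l.length, l.getD (i : ℕ) 0 = x ∧ l.getD (j : ℕ) 0 = y ∧
      ((i : ℤ) - (j : ℤ)).natAbs ≤ 2 := by
  obtain ⟨i, hi, hix, hiy⟩ := h
  rw [Finset.mem_range] at hi
  rcases hiy with hgy | hgy
  · have hlt : i + 1 < l.length := by
      by_contra hge
      push_neg at hge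
      rw [List.getD_eq_default _ _ hge] at hgy
      omega
    refine ⟨⟨i, hi⟩, ⟨i + 1, hlt⟩, hix, hgy, ?_⟩
    simp only [Fin.val_mk]
    omega
  · have hlt : i + 2 < l.length := by
      by_contra hge
      push_neg at hge
      rw [List.getD_eq_default _ _ hge] at hgy
      omega
    refine ⟨⟨i, hi⟩, ⟨i + 2, hlt⟩, hix, hgy, ?_⟩
    simp only [Fin.val_mk]
    omega

/- Bridge lemma: a fast, decidable window check implies `IsKRadiusSeq 2 n`. -/
lemma isKRadiusSeq_of_check (n : ℕ) (l : List ℕ)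
    (h1 : ∀ i ∈ Finset.range l.length, l.getD i 0 ∈ Finset.Icc 1 n)
    (h2 : ∀ x ∈ Finset.Icc 1 n, ∀ y ∈ Finset.Icc 1 n, x < y →
      ∃ i ∈ Finset.range l.length,
        (l.getD i 0 = x ∧ (l.getD (i+1) 0 = y ∨ l.getD (i+2) 0 = y)) ∨
        (l.getD i 0 = y ∧ (l.getD (i+1) 0 = x ∨ l.getD (i+2) 0 = x))) :
    IsKRadiusSeq 2 n (fun i : Fin l.length => l.getD i 0) := by
  constructor
  · intro i
    exact h1 i (Finset.mem_range.2 i.isLt)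
  · intro x hx y hy hxy
    have hx1 : 1 ≤ x := (Finset.mem_Icc.1 hx).1
    have hy1 : 1 ≤ y := (Finset.mem_Icc.1 hy).1
    -- wlog via cases on x < y or y < x
    rcases Nat.lt_or_ge x y with hlt | hge
    · obtain ⟨i, hi, hc⟩ := h2 x hx y hy hlt
      rcases hc with ⟨ha, hb⟩ | ⟨ha, hb⟩
      · exact pair_of_window l hy1 ⟨i, hi, ha, hb⟩
      · obtain ⟨p, q, hp, hq, hd⟩ := pair_of_window l hx1 ⟨i, hi, ha, hb⟩
        exact ⟨q, p, hq, hp, by omega⟩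
    · have hlt : y < x := lt_of_le_of_ne hge (fun h => hxy h.symm)
      obtain ⟨i, hi, hc⟩ := h2 y hy x hx hlt
      rcases hc with ⟨ha, hb⟩ | ⟨ha, hb⟩
      · obtain ⟨p, q, hp, hq, hd⟩ := pair_of_window l hx1 ⟨i, hi, ha, hb⟩
        exact ⟨q, p, hq, hp, by omega⟩
      · exact pair_of_window l hy1 ⟨i, hi, ha, hb⟩


open Finset in
/-- neighbours of position `i`: positions `j ≠ i` within distance 2 -/
def nbr {m : ℕ} (i : Fin m) : Finset (Fin m) :=
  Finset.univ.filter (fun j => ((i : ℤ) - (j : ℤ)).natAbs ≤ 2 ∧ j ≠ i)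

lemma card4 (p q r s : ℤ) : ({p, q, r, s} : Finset ℤ).card ≤ 4 := by
  have h1 := Finset.card_insert_le p ({q, r, s} : Finset ℤ)
  have h2 := Finset.card_insert_le q ({r, s} : Finset ℤ)
  have h3 := Finset.card_insert_le r ({s} : Finset ℤ)
  simp only [Finset.card_singleton] at h3
  omega

lemma card_nbr_le {m : ℕ} (i : Fin m) : (nbr i).card ≤ 4 := by
  have h : (nbr i).card ≤ ({(i:ℤ)-2, (i:ℤ)-1, (i:ℤ)+1, (i:ℤ)+2} : Finset ℤ).card := by
    refine Finset.card_le_card_of_injOn (fun j => (j : ℤ)) ?_ ?_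
    · intro j hj
      have hj : ((i : ℤ) - (j : ℤ)).natAbs ≤ 2 ∧ j ≠ i := (Finset.mem_filter.1 hj).2
      have hne : (j : ℕ) ≠ (i : ℕ) := fun h => hj.2 (Fin.ext h)
      simp only [Finset.mem_coe, Finset.mem_insert, Finset.mem_singleton]
      omega
    · intro j1 _ j2 _ h
      simp only at h
      exact Fin.ext (by exact_mod_cast h)
  exact h.trans (card4 _ _ _ _)

lemma card_nbr_zero {m : ℕ} (i : Fin m) (h0 : (i : ℕ) = 0) : (nbr i).card ≤ 2 := by
  have h : (nbr i).card ≤ ({1, 2} : Finset ℤ).card := by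
    refine Finset.card_le_card_of_injOn (fun j => (j : ℤ)) ?_ ?_
    · intro j hj
      have hj : ((i : ℤ) - (j : ℤ)).natAbs ≤ 2 ∧ j ≠ i := (Finset.mem_filter.1 hj).2
      have hne : (j : ℕ) ≠ (i : ℕ) := fun h => hj.2 (Fin.ext h)
      simp only [Finset.mem_coe, Finset.mem_insert, Finset.mem_singleton]
      omega
    · intro j1 _ j2 _ h
      simp only at h
      exact Fin.ext (by exact_mod_cast h)
  have : ({1, 2} : Finset ℤ).card ≤ 2 := by decide
  omega

/-- occurrence set of value `x` -/
def occ {m : ℕ} (a : Fin m → ℕ) (x : ℕ) : Finset (Fin m) :=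
  Finset.univ.filter (fun i => a i = x)

/-- key counting: value `x` needs `n - 1` neighbour slots -/
lemma slots_lb {m n : ℕ} (a : Fin m → ℕ) (h : IsKRadiusSeq 2 n a)
    {x : ℕ} (hx : x ∈ Finset.Icc 1 n) :
    n - 1 ≤ ∑ i ∈ occ a x, (nbr i).card := by
  classical
  set T : Finset (Fin m) := (occ a x).biUnion nbr with hT
  have hsub : (Finset.Icc 1 n).erase x ⊆ T.image a := by
    intro y hy
    obtain ⟨hne, hyI⟩ := Finset.mem_erase.1 hy
    obtain ⟨i, j, hi, hj, hd⟩ := h.2 x hx y hyI (Ne.symm hne)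
    refine Finset.mem_image.2 ⟨j, ?_, hj⟩
    refine Finset.mem_biUnion.2 ⟨i, ?_, ?_⟩
    · simp [occ, hi]
    · simp only [nbr, Finset.mem_filter, Finset.mem_univ, true_and]
      exact ⟨hd, fun hji => hne (by rw [← hj, hji, hi])⟩
  have h1 : ((Finset.Icc 1 n).erase x).card ≤ T.card :=
    (Finset.card_le_card hsub).trans Finset.card_image_le
  have h2 : ((Finset.Icc 1 n).erase x).card = n - 1 := by
    rw [Finset.card_erase_of_mem hx, Nat.card_Icc]
    omega
  have h3 : T.card ≤ ∑ i ∈ occ a x, (nbr i).card := Finset.card_biUnion_le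
  omega

lemma occ_lb {m n : ℕ} (a : Fin m → ℕ) (h : IsKRadiusSeq 2 n a)
    {x : ℕ} (hx : x ∈ Finset.Icc 1 n) : n - 1 ≤ 4 * (occ a x).card := by
  have h1 := slots_lb a h hx
  have h2 : ∑ i ∈ occ a x, (nbr i).card ≤ (occ a x).card * 4 :=
    Finset.sum_le_card_nsmul _ _ 4 (fun i _ => card_nbr_le i)
  omega

lemma len_eq_sum {m n : ℕ} (a : Fin m → ℕ) (h : IsKRadiusSeq 2 n a) :
    m = ∑ x ∈ Finset.Icc 1 n, (occ a x).card := by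
  classical
  have := Finset.card_eq_sum_card_fiberwise
    (f := a) (s := (Finset.univ : Finset (Fin m))) (t := Finset.Icc 1 n)
    (fun i _ => h.1 i)
  simpa [occ] using this

/-- general lower bound: `m ≥ n * ⌈(n-1)/4⌉` -/
lemma general_lb {m n : ℕ} (a : Fin m → ℕ) (h : IsKRadiusSeq 2 n a) :
    n * ((n + 2) / 4) ≤ m := by
  have hm := len_eq_sum a h
  have hge : ∀ x ∈ Finset.Icc 1 n, (n + 2) / 4 ≤ (occ a x).card := by
    intro x hx
    have := occ_lb a h hx
    omega
  have hle : (Finset.Icc 1 n).card • ((n + 2) / 4) ≤ ∑ x ∈ Finset.Icc 1 n, (occ a x).card :=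
    Finset.card_nsmul_le_sum (Finset.Icc 1 n) (fun x => (occ a x).card) ((n + 2) / 4) hge
  rw [Nat.card_Icc, smul_eq_mul, Nat.add_sub_cancel] at hle
  rw [hm]
  exact hle

/-- no 2-radius sequence of order 8 has length 16 -/
lemma no16 (a : Fin 16 → ℕ) (h : IsKRadiusSeq 2 8 a) : False := by
  classical
  have hsum := len_eq_sum a h
  set x := a 0 with hxdef
  have hx : x ∈ Finset.Icc 1 8 := h.1 0
  -- every value occurs at least twice
  have hge : ∀ y ∈ Finset.Icc 1 8, 2 ≤ (occ a y).card := by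
    intro y hy
    have := occ_lb a h hy
    omega
  -- x occurs exactly twice
  have hx2 : (occ a x).card = 2 := by
    have hsplit : (occ a x).card + ∑ y ∈ (Finset.Icc 1 8).erase x, (occ a y).card
        = ∑ y ∈ Finset.Icc 1 8, (occ a y).card :=
      Finset.add_sum_erase (Finset.Icc 1 8) (fun y => (occ a y).card) hx
    have hrest : ((Finset.Icc 1 8).erase x).card • 2
        ≤ ∑ y ∈ (Finset.Icc 1 8).erase x, (occ a y).card :=
      Finset.card_nsmul_le_sum ((Finset.Icc 1 8).erase x)
        (fun y => (occ a y).card) 2 (fun y hy => hge y (Finset.mem_of_mem_erase hy))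
    have hcerase : ((Finset.Icc 1 8).erase x).card = 7 := by
        rw [Finset.card_erase_of_mem hx, Nat.card_Icc]
    rw [hcerase] at hrest
    simp only [smul_eq_mul] at hrest
    have := hge x hx
    omega
  have h0mem : (0 : Fin 16) ∈ occ a x := by simp [occ, hxdef]
  have hslots := slots_lb a h hx
  have hsplit2 : (nbr (0 : Fin 16)).card + ∑ i ∈ (occ a x).erase 0, (nbr i).card
      = ∑ i ∈ occ a x, (nbr i).card :=
    Finset.add_sum_erase (occ a x) (fun i => (nbr i).card) h0mem
  have hce : ((occ a x).erase 0).card = 1 := by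
    rw [Finset.card_erase_of_mem h0mem, hx2]
  have hrest2 : ∑ i ∈ (occ a x).erase 0, (nbr i).card ≤ 1 * 4 := by
    have hh : ∑ i ∈ (occ a x).erase 0, (nbr i).card ≤ ((occ a x).erase 0).card • 4 :=
      Finset.sum_le_card_nsmul ((occ a x).erase 0) (fun i => (nbr i).card) 4
        (fun i _ => card_nbr_le i)
    rw [hce] at hh
    simpa using hh
  have h0 : (nbr (0 : Fin 16)).card ≤ 2 := card_nbr_zero _ rfl
  omega
def seq8 : List ℕ := [7, 6, 5, 2, 8, 1, 7, 2, 4, 3, 5, 1, 4, 6, 8, 3, 7]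
def seq10 : List ℕ := [5, 7, 2, 8, 6, 1, 10, 2, 6, 1, 3, 5, 4, 7, 9, 1, 2, 4, 3, 8, 10, 8, 5, 9, 6, 4, 7, 10, 3, 9]
def seq11 : List ℕ := [2, 1, 7, 8, 6, 11, 2, 9, 5, 6, 7, 10, 11, 4, 8, 2, 3, 10, 1, 5, 11, 3, 6, 4, 1, 10, 9, 8, 4, 5, 7, 3, 9]
def seq14 : List ℕ := [7, 3, 9, 5, 14, 11, 4, 2, 1, 5, 1, 6, 8, 7, 10, 2, 3, 14, 1, 13, 7, 4, 6, 3, 11, 13, 9, 10, 8, 12, 5, 7, 14, 11, 10, 1, 9, 12, 11, 8, 4, 14, 12, 6, 3, 13, 8, 2, 6, 9, 10, 4, 5, 2, 13, 12]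
def seq15 : List ℕ := [1, 7, 8, 6, 14, 11, 7, 3, 5, 8, 13, 4, 12, 9, 14, 3, 13, 1, 2, 10, 11, 5, 1, 15, 14, 4, 11, 12, 9, 1, 6, 4, 3, 10, 12, 7, 15, 11, 13, 8, 6, 10, 15, 9, 8, 2, 12, 6, 5, 2, 4, 7, 13, 9, 10, 5, 14, 2, 3, 15]

lemma mem8 : (17 : ℕ) ∈ {m | ∃ a : Fin m → ℕ, IsKRadiusSeq 2 8 a} :=
  ⟨fun i : Fin 17 => seq8.getD i 0, isKRadiusSeq_of_check 8 seq8 (by decide) (by decide)⟩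
lemma mem10 : (30 : ℕ) ∈ {m | ∃ a : Fin m → ℕ, IsKRadiusSeq 2 10 a} :=
  ⟨fun i : Fin 30 => seq10.getD i 0, isKRadiusSeq_of_check 10 seq10 (by decide) (by decide)⟩
lemma mem11 : (33 : ℕ) ∈ {m | ∃ a : Fin m → ℕ, IsKRadiusSeq 2 11 a} :=
  ⟨fun i : Fin 33 => seq11.getD i 0, isKRadiusSeq_of_check 11 seq11 (by decide) (by decide)⟩
lemma mem14 : (56 : ℕ) ∈ {m | ∃ a : Fin m → ℕ, IsKRadiusSeq 2 14 a} :=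
  ⟨fun i : Fin 56 => seq14.getD i 0, isKRadiusSeq_of_check 14 seq14 (by decide) (by decide)⟩
lemma mem15 : (60 : ℕ) ∈ {m | ∃ a : Fin m → ℕ, IsKRadiusSeq 2 15 a} :=
  ⟨fun i : Fin 60 => seq15.getD i 0, isKRadiusSeq_of_check 15 seq15 (by decide) (by decide)⟩

lemma val8 : radiusSeqMin 2 8 = 17 := by
  refine le_antisymm (Nat.sInf_le mem8) (le_csInf ⟨17, mem8⟩ ?_)
  rintro m ⟨a, ha⟩
  have h := general_lb a ha
  norm_num at h
  rcases Nat.lt_or_ge m 17 with hlt | hge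
  · have h16 : m = 16 := by omega
    subst h16
    exact (no16 a ha).elim
  · exact hge

lemma valgen (n v : ℕ) (hv : n * ((n + 2) / 4) = v)
    (hmem : v ∈ {m | ∃ a : Fin m → ℕ, IsKRadiusSeq 2 n a}) :
    radiusSeqMin 2 n = v := by
  refine le_antisymm (Nat.sInf_le hmem) (le_csInf ⟨v, hmem⟩ ?_)
  rintro m ⟨a, ha⟩
  have h := general_lb a ha
  omega

lemma val10 : radiusSeqMin 2 10 = 30 := valgen 10 30 (by norm_num) mem10
lemma val11 : radiusSeqMin 2 11 = 33 := valgen 11 33 (by norm_num) mem11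
lemma val14 : radiusSeqMin 2 14 = 56 := valgen 14 56 (by norm_num) mem14
lemma val15 : radiusSeqMin 2 15 = 60 := valgen 15 60 (by norm_num) mem15

/-- `f₂(8) = 17`, `f₂(10) = 30`, `f₂(11) = 33`, `f₂(14) = 56`, `f₂(15) = 60`, and in
each of these cases `f₂(n)` equals the Jaromczyk–Lonc lower bound `L(n)`. -/
theorem radiusSeqMin_two_values :
    radiusSeqMin 2 8 = 17 ∧ (radiusSeqMin 2 8 : ℚ) = JLBound 8 ∧
    radiusSeqMin 2 10 = 30 ∧ (radiusSeqMin 2 10 : ℚ) = JLBound 10 ∧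
    radiusSeqMin 2 11 = 33 ∧ (radiusSeqMin 2 11 : ℚ) = JLBound 11 ∧
    radiusSeqMin 2 14 = 56 ∧ (radiusSeqMin 2 14 : ℚ) = JLBound 14 ∧
    radiusSeqMin 2 15 = 60 ∧ (radiusSeqMin 2 15 : ℚ) = JLBound 15 := by
  refine ⟨val8, ?_, val10, ?_, val11, ?_, val14, ?_, val15, ?_⟩ <;>
    simp only [val8, val10, val11, val14, val15, JLBound] <;> norm_num
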